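/- Assume S_φ is nonempty. Then the following are equivalent: (1) there exists α : E → ℝ with 0 < α(e) < 1 for every edge e and with Σ_{e incident to v} α(e) = φ(v) for every vertex v; (2) every edge of G is free. -/

import Mathlib

open Finset

namespace BipFreeAux
variable {V : Type*} [Fintype V] [DecidableEq V]
variable {G : SimpleGraph V} [DecidableRel G.Adj] {c : V → Bool} {H : Finset (Sym2 V)}

def rel (G : SimpleGraph V) (c : V → Bool) (H : Finset (Sym2 V)) (a b : V) : Prop :=
  G.Adj a b ∧ (s(a, b) ∈ H ↔ c a = false)

noncomputable def tl (c : V → Bool) (H : Finset (Sym2 V)) (e : Sym2 V) : V :=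
  if (e ∈ H ↔ c (Quot.out e).1 = false) then (Quot.out e).1 else (Quot.out e).2
noncomputable def hd (c : V → Bool) (H : Finset (Sym2 V)) (e : Sym2 V) : V :=
  if (e ∈ H ↔ c (Quot.out e).1 = false) then (Quot.out e).2 else (Quot.out e).1

lemma mk_out (e : Sym2 V) : s((Quot.out e).1, (Quot.out e).2) = e := by
  have := Quot.out_eq e
  simpa [Sym2.mk] using this


lemma rel_asymm (hc : ∀ v w, G.Adj v w → c v ≠ c w) {a b : V}
    (h : rel G c H a b) : ¬ rel G c H b a := by
  rintro ⟨hadj, hcond⟩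
  obtain ⟨hadj', hcond'⟩ := h
  have hne := hc a b hadj'
  have : s(b, a) = s(a, b) := Sym2.eq_swap
  rw [this] at hcond
  rcases Bool.eq_false_or_eq_true (c a) with h1 | h1 <;>
    rcases Bool.eq_false_or_eq_true (c b) with h2 | h2 <;>
      simp_all

lemma tl_hd_spec (hc : ∀ v w, G.Adj v w → c v ≠ c w) {e : Sym2 V}
    (he : e ∈ G.edgeFinset) :
    rel G c H (tl c H e) (hd c H e) ∧ s(tl c H e, hd c H e) = e := by
  set x := (Quot.out e).1 with hx
  set y := (Quot.out e).2 with hy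
  have hxy : s(x, y) = e := mk_out e
  have hadj : G.Adj x y := by
    rw [SimpleGraph.mem_edgeFinset, ← hxy] at he
    exact he
  have hne := hc x y hadj
  by_cases hcond : (e ∈ H ↔ c x = false)
  · have h1 : tl c H e = x := by rw [tl, if_pos hcond]
    have h2 : hd c H e = y := by rw [hd, if_pos hcond]
    rw [h1, h2]
    exact ⟨⟨hadj, by rw [hxy]; exact hcond⟩, hxy⟩
  · have h1 : tl c H e = y := by rw [tl, if_neg hcond]
    have h2 : hd c H e = x := by rw [hd, if_neg hcond]
    rw [h1, h2]
    refine ⟨⟨hadj.symm, ?_⟩, by rw [Sym2.eq_swap]; exact hxy⟩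
    rw [Sym2.eq_swap, hxy]
    rcases Bool.eq_false_or_eq_true (c x) with h3 | h3 <;>
      rcases Bool.eq_false_or_eq_true (c y) with h4 | h4 <;> (clear hc; simp_all)

lemma fpos (α : Sym2 V → ℝ) (hα : ∀ e ∈ G.edgeFinset, 0 < α e ∧ α e < 1)
    {e : Sym2 V} (he : e ∈ G.edgeFinset) :
    0 < |α e - if e ∈ H then (1:ℝ) else 0| := by
  obtain ⟨h1, h2⟩ := hα e he
  rw [abs_pos]
  by_cases h : e ∈ H <;> simp [h] <;> intro h' <;> nlinarith

lemma tl_filter_eq (hc : ∀ v w, G.Adj v w → c v ≠ c w) (a : V) :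
    G.edgeFinset.filter (fun e => tl c H e = a)
      = G.edgeFinset.filter (fun e => a ∈ e ∧ (e ∈ H ↔ c a = false)) := by
  ext e
  simp only [mem_filter, and_congr_right_iff]
  intro he
  obtain ⟨hrel, heq⟩ := tl_hd_spec (H := H) hc he
  have hmemtl : tl c H e ∈ e := by
    have := Sym2.mem_mk_left (tl c H e) (hd c H e); rwa [heq] at this
  have h1 : e ∈ H ↔ c (tl c H e) = false := by
    have := hrel.2; rwa [heq] at this
  have hne : c (tl c H e) ≠ c (hd c H e) := hc _ _ hrel.1
  constructor
  · rintro rfl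
    exact ⟨hmemtl, h1⟩
  · rintro ⟨hmem, hcond⟩
    rw [← heq, Sym2.mem_iff] at hmem
    rcases hmem with h | h
    · exact h.symm
    · exfalso
      rw [h] at hcond
      rcases Bool.eq_false_or_eq_true (c (tl c H e)) with h3 | h3 <;>
        rcases Bool.eq_false_or_eq_true (c (hd c H e)) with h4 | h4 <;> simp_all

lemma hd_filter_eq (hc : ∀ v w, G.Adj v w → c v ≠ c w) (a : V) :
    G.edgeFinset.filter (fun e => hd c H e = a)
      = G.edgeFinset.filter (fun e => a ∈ e ∧ ¬(e ∈ H ↔ c a = false)) := by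
  ext e
  simp only [mem_filter, and_congr_right_iff]
  intro he
  obtain ⟨hrel, heq⟩ := tl_hd_spec (H := H) hc he
  have hmemhd : hd c H e ∈ e := by
    have := Sym2.mem_mk_right (tl c H e) (hd c H e); rwa [heq] at this
  have h1 : e ∈ H ↔ c (tl c H e) = false := by
    have := hrel.2; rwa [heq] at this
  have hne : c (tl c H e) ≠ c (hd c H e) := hc _ _ hrel.1
  constructor
  · rintro rfl
    refine ⟨hmemhd, ?_⟩
    rcases Bool.eq_false_or_eq_true (c (tl c H e)) with h3 | h3 <;>
      rcases Bool.eq_false_or_eq_true (c (hd c H e)) with h4 | h4 <;> simp_all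
  · rintro ⟨hmem, hcond⟩
    rw [← heq, Sym2.mem_iff] at hmem
    rcases hmem with h | h
    · exfalso; rw [h] at hcond; exact hcond h1
    · exact h.symm

lemma circ (hc : ∀ v w, G.Adj v w → c v ≠ c w) (φ : V → ℕ) (α : Sym2 V → ℝ)
    (hα : ∀ e ∈ G.edgeFinset, 0 < α e ∧ α e < 1)
    (hαs : ∀ v : V, ∑ e ∈ G.edgeFinset.filter (fun e => v ∈ e), α e = (φ v : ℝ))
    (hH : H ⊆ G.edgeFinset)
    (hdeg : ∀ v : V, (H.filter fun e => v ∈ e).card = φ v) (a : V) :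
    ∑ e ∈ G.edgeFinset.filter (fun e => tl c H e = a),
        |α e - if e ∈ H then (1:ℝ) else 0|
      = ∑ e ∈ G.edgeFinset.filter (fun e => hd c H e = a),
        |α e - if e ∈ H then (1:ℝ) else 0| := by
  classical
  set inc := G.edgeFinset.filter (fun e => a ∈ e) with hinc
  have hsum0 : ∑ e ∈ inc, (α e - if e ∈ H then (1:ℝ) else 0) = 0 := by
    rw [Finset.sum_sub_distrib, hαs a, Finset.sum_boole]
    have : inc.filter (· ∈ H) = H.filter (fun e => a ∈ e) := by
      ext e
      simp only [hinc, mem_filter]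
      constructor
      · rintro ⟨⟨_, h2⟩, h3⟩; exact ⟨h3, h2⟩
      · rintro ⟨h1, h2⟩; exact ⟨⟨hH h1, h2⟩, h1⟩
    rw [this, hdeg a]
    simp
  have hsplit : inc.filter (fun e => e ∈ H ↔ c a = false) ∪
      inc.filter (fun e => ¬(e ∈ H ↔ c a = false)) = inc :=
    Finset.filter_union_filter_not_eq _ _
  have hdisj : Disjoint (inc.filter (fun e => e ∈ H ↔ c a = false))
      (inc.filter (fun e => ¬(e ∈ H ↔ c a = false))) :=
    Finset.disjoint_filter_filter_not _ _ _
  rw [tl_filter_eq (H := H) hc a, hd_filter_eq (H := H) hc a]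
  have hOut : G.edgeFinset.filter (fun e => a ∈ e ∧ (e ∈ H ↔ c a = false))
      = inc.filter (fun e => e ∈ H ↔ c a = false) := by
    rw [hinc, Finset.filter_filter]
  have hIn : G.edgeFinset.filter (fun e => a ∈ e ∧ ¬(e ∈ H ↔ c a = false))
      = inc.filter (fun e => ¬(e ∈ H ↔ c a = false)) := by
    rw [hinc, Finset.filter_filter]
  rw [hOut, hIn]
  rw [← hsplit, Finset.sum_union hdisj] at hsum0
  rcases Bool.eq_false_or_eq_true (c a) with hca | hca
  · have h1 : ∑ e ∈ inc.filter (fun e => e ∈ H ↔ c a = false),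
        |α e - if e ∈ H then (1:ℝ) else 0|
        = ∑ e ∈ inc.filter (fun e => e ∈ H ↔ c a = false),
          (α e - if e ∈ H then (1:ℝ) else 0) := by
      apply Finset.sum_congr rfl
      intro e he
      rw [mem_filter] at he
      have heE : e ∈ G.edgeFinset := (mem_filter.1 he.1).1
      have heH : e ∉ H := fun h => by
        have := he.2.mp h; rw [hca] at this; exact absurd this (by simp)
      have := (hα e heE).1
      rw [if_neg heH, abs_of_pos (by linarith)]
    have h2 : ∑ e ∈ inc.filter (fun e => ¬(e ∈ H ↔ c a = false)),
        |α e - if e ∈ H then (1:ℝ) else 0|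
        = ∑ e ∈ inc.filter (fun e => ¬(e ∈ H ↔ c a = false)),
          (-(α e - if e ∈ H then (1:ℝ) else 0)) := by
      apply Finset.sum_congr rfl
      intro e he
      rw [mem_filter] at he
      have heE : e ∈ G.edgeFinset := (mem_filter.1 he.1).1
      have heH : e ∈ H := by
        by_contra h
        exact he.2 (iff_of_false h (by rw [hca]; simp))
      have := (hα e heE).2
      rw [if_pos heH, abs_of_neg (by linarith)]
    rw [h1, h2, Finset.sum_neg_distrib]
    linarith [hsum0]

  · have h1 : ∑ e ∈ inc.filter (fun e => e ∈ H ↔ c a = false),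
        |α e - if e ∈ H then (1:ℝ) else 0|
        = ∑ e ∈ inc.filter (fun e => e ∈ H ↔ c a = false),
          (-(α e - if e ∈ H then (1:ℝ) else 0)) := by
      apply Finset.sum_congr rfl
      intro e he
      rw [mem_filter] at he
      have heE : e ∈ G.edgeFinset := (mem_filter.1 he.1).1
      have heH : e ∈ H := he.2.mpr hca
      have := (hα e heE).2
      rw [if_pos heH, abs_of_neg (by linarith)]
    have h2 : ∑ e ∈ inc.filter (fun e => ¬(e ∈ H ↔ c a = false)),
        |α e - if e ∈ H then (1:ℝ) else 0|
        = ∑ e ∈ inc.filter (fun e => ¬(e ∈ H ↔ c a = false)),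
          (α e - if e ∈ H then (1:ℝ) else 0) := by
      apply Finset.sum_congr rfl
      intro e he
      rw [mem_filter] at he
      have heE : e ∈ G.edgeFinset := (mem_filter.1 he.1).1
      have heH : e ∉ H := fun h => he.2 (iff_of_true h hca)
      have := (hα e heE).1
      rw [if_neg heH, abs_of_pos (by linarith)]
    rw [h1, h2, Finset.sum_neg_distrib]
    linarith [hsum0]
lemma reach (hc : ∀ v w, G.Adj v w → c v ≠ c w) (φ : V → ℕ) (α : Sym2 V → ℝ)
    (hα : ∀ e ∈ G.edgeFinset, 0 < α e ∧ α e < 1)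
    (hαs : ∀ v : V, ∑ e ∈ G.edgeFinset.filter (fun e => v ∈ e), α e = (φ v : ℝ))
    (hH : H ⊆ G.edgeFinset)
    (hdeg : ∀ v : V, (H.filter fun e => v ∈ e).card = φ v)
    {e₀ : Sym2 V} (he₀ : e₀ ∈ G.edgeFinset) :
    Relation.ReflTransGen (rel G c H) (hd c H e₀) (tl c H e₀) := by
  classical
  set f : Sym2 V → ℝ := fun e => |α e - if e ∈ H then (1:ℝ) else 0| with hf
  set v := hd c H e₀ with hv
  set R : Finset V := univ.filter (fun a => Relation.ReflTransGen (rel G c H) v a)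
    with hR
  have hvR : v ∈ R := mem_filter.2 ⟨mem_univ _, Relation.ReflTransGen.refl⟩
  have hclosed : ∀ a ∈ R, ∀ b, rel G c H a b → b ∈ R := by
    intro a ha b hab
    rw [hR, mem_filter] at ha ⊢
    exact ⟨mem_univ _, ha.2.tail hab⟩
  have hsub : G.edgeFinset.filter (fun e => tl c H e ∈ R)
      ⊆ G.edgeFinset.filter (fun e => hd c H e ∈ R) := by
    intro e he
    rw [mem_filter] at he ⊢
    exact ⟨he.1, hclosed _ he.2 _ (tl_hd_spec hc he.1).1⟩
  have hsums : ∑ e ∈ G.edgeFinset.filter (fun e => tl c H e ∈ R), f e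
      = ∑ e ∈ G.edgeFinset.filter (fun e => hd c H e ∈ R), f e := by
    rw [← Finset.sum_fiberwise_eq_sum_filter G.edgeFinset R (tl c H) f,
      ← Finset.sum_fiberwise_eq_sum_filter G.edgeFinset R (hd c H) f]
    exact Finset.sum_congr rfl fun a _ => circ hc φ α hα hαs hH hdeg a
  have hzero : ∑ e ∈ (G.edgeFinset.filter (fun e => hd c H e ∈ R) \
      G.edgeFinset.filter (fun e => tl c H e ∈ R)), f e = 0 := by
    rw [Finset.sum_sdiff_eq_sub hsub, hsums, sub_self]
  have hempty : (G.edgeFinset.filter (fun e => hd c H e ∈ R) \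
      G.edgeFinset.filter (fun e => tl c H e ∈ R)) = ∅ := by
    by_contra hne
    have hpos : 0 < ∑ e ∈ (G.edgeFinset.filter (fun e => hd c H e ∈ R) \
        G.edgeFinset.filter (fun e => tl c H e ∈ R)), f e := by
      apply Finset.sum_pos
      · intro e he
        have : e ∈ G.edgeFinset := by
          have := Finset.mem_sdiff.1 he
          exact (mem_filter.1 this.1).1
        exact fpos α hα this
      · exact Finset.nonempty_of_ne_empty hne
    rw [hzero] at hpos
    exact lt_irrefl _ hpos
  have he₀B : e₀ ∈ G.edgeFinset.filter (fun e => hd c H e ∈ R) :=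
    mem_filter.2 ⟨he₀, hvR⟩
  have he₀A : e₀ ∈ G.edgeFinset.filter (fun e => tl c H e ∈ R) := by
    by_contra h
    have : e₀ ∈ (G.edgeFinset.filter (fun e => hd c H e ∈ R) \
        G.edgeFinset.filter (fun e => tl c H e ∈ R)) := Finset.mem_sdiff.2 ⟨he₀B, h⟩
    rw [hempty] at this
    exact absurd this (Finset.notMem_empty _)
  have := (mem_filter.1 he₀A).2
  rw [hR, mem_filter] at this
  exact this.2

lemma exists_path {α : Type*} {r : α → α → Prop} {x y : α}
    (h : Relation.ReflTransGen r x y) :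
    ∃ (m : ℕ) (p : ℕ → α), p 0 = x ∧ p m = y ∧ ∀ i < m, r (p i) (p (i+1)) := by
  induction h with
  | refl => exact ⟨0, fun _ => x, rfl, rfl, by omega⟩
  | @tail b d hab hbd ih =>
    obtain ⟨m, p, h0, hm, hch⟩ := ih
    refine ⟨m + 1, fun i => if i ≤ m then p i else d, by simp [h0], by simp, ?_⟩
    intro i hi
    rcases Nat.lt_or_ge i m with h1 | h1
    · have e1 : i ≤ m := by omega
      have e2 : i + 1 ≤ m := by omega
      simp only [if_pos e1, if_pos e2]
      exact hch i h1
    · have e0 : i = m := by omega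
      subst e0
      simp only [if_pos (le_refl i), if_neg (by omega : ¬ i + 1 ≤ i)]
      rw [hm]
      exact hbd

lemma exists_simple_path {α : Type*} {r : α → α → Prop} {x y : α}
    (h : Relation.ReflTransGen r x y) :
    ∃ (m : ℕ) (p : ℕ → α), p 0 = x ∧ p m = y ∧ (∀ i < m, r (p i) (p (i+1))) ∧
      ∀ i ≤ m, ∀ j ≤ m, p i = p j → i = j := by
  classical
  have hex : ∃ m : ℕ, ∃ p : ℕ → α, p 0 = x ∧ p m = y ∧ ∀ i < m, r (p i) (p (i+1)) :=
    exists_path h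
  obtain ⟨p, h0, hm, hch⟩ := Nat.find_spec hex
  set m₀ := Nat.find hex with hm₀
  refine ⟨m₀, p, h0, hm, hch, ?_⟩
  have key : ∀ i j : ℕ, i < j → j ≤ m₀ → p i = p j → False := by
    intro i j hij hj heqp
    set d := j - i with hd
    have hd0 : 0 < d := by omega
    have hlt : m₀ - d < m₀ := by omega
    apply Nat.find_min hex hlt
    refine ⟨fun t => if t ≤ i then p t else p (t + d), by simp [h0], ?_, ?_⟩
    · rcases le_or_gt (m₀ - d) i with h1 | h1
      · have hjm : j = m₀ := by omega
        have him : m₀ - d = i := by omega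
        dsimp only
        rw [if_pos (by omega), him, heqp, hjm, hm]
      · dsimp only
        rw [if_neg (by omega)]
        have : m₀ - d + d = m₀ := by omega
        rw [this, hm]
    · intro t ht
      dsimp only
      rcases Nat.lt_or_ge (t + 1) (i + 1) with h1 | h1
      · rw [if_pos (by omega), if_pos (by omega)]
        exact hch t (by omega)
      · rcases Nat.lt_or_ge t (i + 1) with h2 | h2
        · have : t = i := by omega
          subst this
          rw [if_pos (le_refl t), if_neg (by omega), heqp]
          have : t + 1 + d = j + 1 := by omega
          rw [this]
          exact hch j (by omega)
        · rw [if_neg (by omega), if_neg (by omega)]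
          have : t + d + 1 = t + 1 + d := by omega
          rw [← this]
          exact hch (t + d) (by omega)
  intro i hi j hj heqp
  by_contra hne
  rcases Nat.lt_or_ge i j with h1 | h1
  · exact key i j h1 hj heqp
  · exact key j i (by omega) hi heqp.symm
lemma flip (hc : ∀ v w, G.Adj v w → c v ≠ c w) (φ : V → ℕ)
    (hH : H ⊆ G.edgeFinset)
    (hdeg : ∀ v : V, (H.filter fun e => v ∈ e).card = φ v)
    (n : ℕ) (hn : 2 ≤ n) (p : ℕ → V)
    (hinj : ∀ i < n, ∀ j < n, p i = p j → i = j)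
    (hch : ∀ i < n, rel G c H (p i) (p ((i+1) % n))) :
    ((H \ (range n).image (fun i => s(p i, p ((i+1) % n)))) ∪
        ((range n).image (fun i => s(p i, p ((i+1) % n))) \ H)) ⊆ G.edgeFinset ∧
      ∀ w : V, ((((H \ (range n).image (fun i => s(p i, p ((i+1) % n)))) ∪
        ((range n).image (fun i => s(p i, p ((i+1) % n))) \ H)).filter
          (fun e => w ∈ e)).card = φ w) := by
  classical
  set C := (range n).image (fun i => s(p i, p ((i+1) % n))) with hC
  have hsucclt : ∀ i < n, (i+1) % n < n := fun i hi => Nat.mod_lt _ (by omega)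
  have hadj : ∀ i < n, G.Adj (p i) (p ((i+1) % n)) := fun i hi => (hch i hi).1
  have heH : ∀ i < n, (s(p i, p ((i+1) % n)) ∈ H ↔ c (p i) = false) :=
    fun i hi => (hch i hi).2
  have hCsub : C ⊆ G.edgeFinset := by
    intro e he
    rw [hC, Finset.mem_image] at he
    obtain ⟨i, hi, rfl⟩ := he
    rw [SimpleGraph.mem_edgeFinset]
    exact hadj i (by simpa using hi)
  have einj : ∀ i < n, ∀ j < n,
      s(p i, p ((i+1) % n)) = s(p j, p ((j+1) % n)) → i = j := by
    intro i hi j hj h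
    rcases (Sym2.mk_eq_mk_iff (p := (p i, p ((i+1) % n))) (q := (p j, p ((j+1) % n)))).1 h with h1 | h1
    · exact hinj i hi j hj (Prod.ext_iff.1 h1).1
    · exfalso
      have h2 : p i = p ((j+1) % n) := (Prod.ext_iff.1 h1).1
      have h3 : p ((i+1) % n) = p j := (Prod.ext_iff.1 h1).2
      have e2 : i = (j+1) % n := hinj i hi _ (hsucclt j hj) h2
      have e3 : (i+1) % n = j := hinj _ (hsucclt i hi) j hj h3
      have r1 := hch i hi
      rw [e3] at r1
      have r2 := hch j hj
      rw [← e2] at r2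
      exact rel_asymm hc r1 r2
  have hsubset : ((H \ C) ∪ (C \ H)) ⊆ G.edgeFinset := by
    intro e he
    rcases Finset.mem_union.1 he with h | h
    · exact hH (Finset.mem_sdiff.1 h).1
    · exact hCsub (Finset.mem_sdiff.1 h).1
  refine ⟨hsubset, ?_⟩
  intro w
  set X := H.filter (fun e => w ∈ e) with hX
  have hXcard : X.card = φ w := hdeg w
  have hfilter_eq : ((H \ C) ∪ (C \ H)).filter (fun e => w ∈ e)
      = (X \ C.filter (fun e => w ∈ e)) ∪ (C.filter (fun e => w ∈ e) \ X) := by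
    ext e
    simp only [hX, Finset.mem_filter, Finset.mem_union, Finset.mem_sdiff]
    tauto
  rw [hfilter_eq]
  set Y := C.filter (fun e => w ∈ e) with hY
  have hdisj : Disjoint (X \ Y) (Y \ X) := disjoint_sdiff_sdiff
  rw [Finset.card_union_of_disjoint hdisj]
  have hcard1 := Finset.card_sdiff_add_card_inter X Y
  have hcard2 := Finset.card_sdiff_add_card_inter Y X
  by_cases hcase : ∃ i, i < n ∧ w = p i
  · obtain ⟨i, hi, rfl⟩ := hcase
    set prev := if i = 0 then n - 1 else i - 1 with hprev
    have hprev_lt : prev < n := by rw [hprev]; split_ifs <;> omega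
    have hprev_succ : (prev + 1) % n = i := by
      rw [hprev]; split_ifs with h
      · have : n - 1 + 1 = n := by omega
        rw [this, Nat.mod_self, h]
      · have : i - 1 + 1 = i := by omega
        rw [this, Nat.mod_eq_of_lt hi]
    have hprev_ne : prev ≠ i := by rw [hprev]; split_ifs <;> omega
    set eA := s(p prev, p ((prev + 1) % n)) with heA
    set eB := s(p i, p ((i + 1) % n)) with heB
    have heA' : eA = s(p prev, p i) := by rw [heA, hprev_succ]
    have hABne : eA ≠ eB := fun h => hprev_ne (einj prev hprev_lt i hi h)
    have hwA : p i ∈ eA := by rw [heA']; exact Sym2.mem_mk_right _ _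
    have hwB : p i ∈ eB := by rw [heB]; exact Sym2.mem_mk_left _ _
    have hYval : Y = {eA, eB} := by
      ext e
      rw [hY, Finset.mem_filter]
      constructor
      · rintro ⟨heC, hwe⟩
        rw [hC, Finset.mem_image] at heC
        obtain ⟨j, hj, rfl⟩ := heC
        rw [Finset.mem_range] at hj
        rw [Sym2.mem_iff] at hwe
        rcases hwe with h | h
        · have : i = j := hinj i hi j hj h
          subst this
          exact Finset.mem_insert.2 (Or.inr (Finset.mem_singleton.2 rfl))
        · have hij : i = (j+1) % n := hinj i hi _ (hsucclt j hj) h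
          have hjprev : j = prev := by
            rw [hprev]
            rcases Nat.lt_or_ge (j+1) n with h1 | h1
            · rw [Nat.mod_eq_of_lt h1] at hij
              split_ifs <;> omega
            · have hjn : j + 1 = n := by omega
              rw [hjn, Nat.mod_self] at hij
              split_ifs <;> omega
          subst hjprev
          exact Finset.mem_insert_self _ _
      · intro h
        rcases Finset.mem_insert.1 h with h | h
        · rw [h]
          exact ⟨Finset.mem_image.2 ⟨prev, Finset.mem_range.2 hprev_lt, rfl⟩, hwA⟩
        · rw [Finset.mem_singleton] at h
          rw [h]
          exact ⟨Finset.mem_image.2 ⟨i, Finset.mem_range.2 hi, rfl⟩, hwB⟩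
    have hcAB : c (p prev) ≠ c (p i) := by
      have := hadj prev hprev_lt
      rw [hprev_succ] at this
      exact hc _ _ this
    have heAH : eA ∈ H ↔ c (p prev) = false := heH prev hprev_lt
    have heBH : eB ∈ H ↔ c (p i) = false := heH i hi
    have hone : (eA ∈ H ∧ eB ∉ H) ∨ (eA ∉ H ∧ eB ∈ H) := by
      rcases Bool.eq_false_or_eq_true (c (p prev)) with h1 | h1 <;>
        rcases Bool.eq_false_or_eq_true (c (p i)) with h2 | h2
      · exact absurd (h1.trans h2.symm) hcAB
      · refine Or.inr ⟨fun hA => ?_, heBH.mpr h2⟩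
        have := heAH.mp hA
        rw [h1] at this
        simp at this
      · refine Or.inl ⟨heAH.mpr h1, fun hB => ?_⟩
        have := heBH.mp hB
        rw [h2] at this
        simp at this
      · exact absurd (h1.trans h2.symm) hcAB
    have hXY : X ∩ Y = if eA ∈ H then {eA} else {eB} := by
      rcases hone with ⟨h1, h2⟩ | ⟨h1, h2⟩
      · rw [if_pos h1]
        ext e
        rw [Finset.mem_inter, hX, Finset.mem_filter, hYval]
        constructor
        · rintro ⟨⟨heH', hwe⟩, hmem⟩
          rcases Finset.mem_insert.1 hmem with h | h
          · simp [h]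
          · rw [Finset.mem_singleton] at h; subst h; exact absurd heH' h2
        · intro h
          rw [Finset.mem_singleton] at h
          subst h
          exact ⟨⟨h1, hwA⟩, Finset.mem_insert_self _ _⟩
      · rw [if_neg h1]
        ext e
        rw [Finset.mem_inter, hX, Finset.mem_filter, hYval]
        constructor
        · rintro ⟨⟨heH', hwe⟩, hmem⟩
          rcases Finset.mem_insert.1 hmem with h | h
          · subst h; exact absurd heH' h1
          · exact h
        · intro h
          rw [Finset.mem_singleton] at h
          subst h
          refine ⟨⟨h2, hwB⟩, Finset.mem_insert.2 (Or.inr (Finset.mem_singleton_self _))⟩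
    have hXYcard : (X ∩ Y).card = 1 := by
      rw [hXY]; split_ifs <;> simp
    have hYcard : Y.card = 2 := by
      rw [hYval]; exact Finset.card_pair hABne
    have hX1 : 1 ≤ X.card := by
      have : X ∩ Y ⊆ X := Finset.inter_subset_left
      have := Finset.card_le_card this
      omega
    rw [Finset.inter_comm Y X] at hcard2
    omega
  · have hYempty : Y = ∅ := by
      rw [hY, Finset.eq_empty_iff_forall_notMem]
      intro e he
      rw [Finset.mem_filter, hC, Finset.mem_image] at he
      obtain ⟨⟨j, hj, rfl⟩, hwe⟩ := he
      rw [Finset.mem_range] at hj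
      rw [Sym2.mem_iff] at hwe
      rcases hwe with h | h
      · exact hcase ⟨j, hj, h⟩
      · exact hcase ⟨(j+1) % n, hsucclt j hj, h⟩
    rw [hYempty] at hcard1 hcard2 ⊢
    simp only [Finset.sdiff_empty, Finset.empty_sdiff, Finset.card_empty] at *
    omega
lemma core (hc : ∀ v w, G.Adj v w → c v ≠ c w) (φ : V → ℕ) (α : Sym2 V → ℝ)
    (hα : ∀ e ∈ G.edgeFinset, 0 < α e ∧ α e < 1)
    (hαs : ∀ v : V, ∑ e ∈ G.edgeFinset.filter (fun e => v ∈ e), α e = (φ v : ℝ))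
    (hH : H ⊆ G.edgeFinset)
    (hdeg : ∀ v : V, (H.filter fun e => v ∈ e).card = φ v)
    {e₀ : Sym2 V} (he₀ : e₀ ∈ G.edgeFinset) (he₀H : e₀ ∈ H) :
    ∃ H₂ : Finset (Sym2 V), (H₂ ⊆ G.edgeFinset ∧
      ∀ v : V, (H₂.filter fun e => v ∈ e).card = φ v) ∧ e₀ ∉ H₂ := by
  classical
  obtain ⟨hrel0, heq0⟩ := tl_hd_spec (H := H) hc he₀
  obtain ⟨m, q, h0, hm, hch, hinj⟩ :=
    exists_simple_path (reach hc φ α hα hαs hH hdeg he₀)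
  have htlhd : tl c H e₀ ≠ hd c H e₀ := hrel0.1.ne
  have hm1 : 1 ≤ m := by
    rcases Nat.eq_zero_or_pos m with h | h
    · exfalso
      rw [h] at hm
      rw [hm] at h0
      exact htlhd h0
    · exact h
  have hn2 : 2 ≤ m + 1 := by omega
  have hchc : ∀ i < m + 1, rel G c H (q i) (q ((i+1) % (m+1))) := by
    intro i hi
    rcases Nat.lt_or_ge i m with h | h
    · rw [Nat.mod_eq_of_lt (by omega)]
      exact hch i h
    · have : i = m := by omega
      subst this
      rw [Nat.mod_self, hm, h0]
      exact hrel0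
  have hinj' : ∀ i < m + 1, ∀ j < m + 1, q i = q j → i = j :=
    fun i hi j hj h => hinj i (by omega) j (by omega) h
  obtain ⟨hsub, hdeg2⟩ := flip hc φ hH hdeg (m+1) hn2 q hinj' hchc
  refine ⟨_, ⟨hsub, hdeg2⟩, ?_⟩
  have heC : e₀ ∈ (range (m+1)).image (fun i => s(q i, q ((i+1) % (m+1)))) := by
    refine Finset.mem_image.2 ⟨m, Finset.mem_range.2 (by omega), ?_⟩
    rw [Nat.mod_self, hm, h0, heq0]
  intro h
  rcases Finset.mem_union.1 h with h' | h'
  · exact (Finset.mem_sdiff.1 h').2 heC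
  · exact (Finset.mem_sdiff.1 h').2 he₀H
/-- degree as card of incident edge filter -/
lemma degree_eq_card_filter (G : SimpleGraph V) [DecidableRel G.Adj] (v : V) :
    (G.edgeFinset.filter (fun e => v ∈ e)).card = G.degree v := by
  classical
  rw [← SimpleGraph.incidenceFinset_eq_filter]
  exact SimpleGraph.card_incidenceFinset_eq_degree G v

end BipFreeAux

open BipFreeAux in
/-- There exists `α` on the edges of `G` with `0 < α e < 1` and with the incident sum at
every vertex `v` equal to `φ v` if and only if every edge of `G` is free (contained in
some element of `S_φ` and omitted by some element of `S_φ`), assuming `S_φ ≠ ∅`.  Here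
`S_φ` is encoded as the set of edge sets `H ⊆ E(G)` in which every vertex is incident to
exactly `φ v` edges of `H`. -/
theorem exists_strict_fractional_degree_flow_iff_all_edges_free
    {V : Type*} [Fintype V] [DecidableEq V]
    (G : SimpleGraph V) [DecidableRel G.Adj]
    (hbip : ∃ c : V → Bool, ∀ v w, G.Adj v w → c v ≠ c w)
    (φ : V → ℕ)
    (hne : ∃ H : Finset (Sym2 V), H ⊆ G.edgeFinset ∧
      ∀ v : V, (H.filter fun e => v ∈ e).card = φ v) :
    (∃ α : Sym2 V → ℝ,
        (∀ e ∈ G.edgeFinset, 0 < α e ∧ α e < 1) ∧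
        ∀ v : V, ∑ e ∈ G.edgeFinset.filter (fun e => v ∈ e), α e = (φ v : ℝ)) ↔
      (∀ e ∈ G.edgeFinset,
        ∃ H₁ : Finset (Sym2 V), (H₁ ⊆ G.edgeFinset ∧
            ∀ v : V, (H₁.filter fun e' => v ∈ e').card = φ v) ∧ e ∈ H₁ ∧
        ∃ H₂ : Finset (Sym2 V), (H₂ ⊆ G.edgeFinset ∧
            ∀ v : V, (H₂.filter fun e' => v ∈ e').card = φ v) ∧ e ∉ H₂) := by
  classical
  obtain ⟨c, hc⟩ := hbip
  constructor
  · rintro ⟨α, hα, hαs⟩ e he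
    obtain ⟨H, hH, hdeg⟩ := hne
    -- we produce H₁ (containing e) and H₂ (omitting e)
    have hφle : ∀ v, φ v ≤ G.degree v := by
      intro v
      rw [← hdeg v, ← degree_eq_card_filter G v]
      exact Finset.card_le_card (Finset.filter_subset_filter _ hH)
    have hH2 : ∃ H₂ : Finset (Sym2 V), (H₂ ⊆ G.edgeFinset ∧
        ∀ v : V, (H₂.filter fun e' => v ∈ e').card = φ v) ∧ e ∉ H₂ := by
      by_cases heH : e ∈ H
      · exact core hc φ α hα hαs hH hdeg he heH
      · exact ⟨H, ⟨hH, hdeg⟩, heH⟩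
    have hH1 : ∃ H₁ : Finset (Sym2 V), (H₁ ⊆ G.edgeFinset ∧
        ∀ v : V, (H₁.filter fun e' => v ∈ e').card = φ v) ∧ e ∈ H₁ := by
      by_cases heH : e ∈ H
      · exact ⟨H, ⟨hH, hdeg⟩, heH⟩
      · -- complement trick
        set φ' : V → ℕ := fun v => G.degree v - φ v with hφ'
        set H' : Finset (Sym2 V) := G.edgeFinset \ H with hH'
        have hH'sub : H' ⊆ G.edgeFinset := Finset.sdiff_subset
        have hfilter_sdiff : ∀ v, H'.filter (fun e' => v ∈ e')
            = G.edgeFinset.filter (fun e' => v ∈ e') \ H.filter (fun e' => v ∈ e') := by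
          intro v
          ext e'
          simp only [hH', Finset.mem_filter, Finset.mem_sdiff]
          tauto
        have hH'deg : ∀ v, (H'.filter fun e' => v ∈ e').card = φ' v := by
          intro v
          rw [hfilter_sdiff v, Finset.card_sdiff_of_subset (Finset.filter_subset_filter _ hH),
            degree_eq_card_filter G v, hdeg v]
        have hα' : ∀ e' ∈ G.edgeFinset, 0 < 1 - α e' ∧ 1 - α e' < 1 := by
          intro e' he'
          obtain ⟨h1, h2⟩ := hα e' he'
          constructor <;> linarith
        have hα's : ∀ v : V, ∑ e' ∈ G.edgeFinset.filter (fun e' => v ∈ e'),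
            (1 - α e') = (φ' v : ℝ) := by
          intro v
          rw [Finset.sum_sub_distrib, hαs v, Finset.sum_const, nsmul_eq_mul, mul_one,
            degree_eq_card_filter G v, hφ']
          rw [Nat.cast_sub (hφle v)]
        have heH' : e ∈ H' := Finset.mem_sdiff.2 ⟨he, heH⟩
        obtain ⟨H₂', ⟨hH₂'sub, hH₂'deg⟩, hH₂'e⟩ :=
          core hc φ' (fun e' => 1 - α e') hα' hα's hH'sub hH'deg he heH'
        refine ⟨G.edgeFinset \ H₂', ⟨Finset.sdiff_subset, ?_⟩,
          Finset.mem_sdiff.2 ⟨he, hH₂'e⟩⟩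
        intro v
        have h1 : (G.edgeFinset \ H₂').filter (fun e' => v ∈ e')
            = G.edgeFinset.filter (fun e' => v ∈ e') \ H₂'.filter (fun e' => v ∈ e') := by
          ext e'
          simp only [Finset.mem_filter, Finset.mem_sdiff]
          tauto
        rw [h1, Finset.card_sdiff_of_subset (Finset.filter_subset_filter _ hH₂'sub),
          degree_eq_card_filter G v, hH₂'deg v]
        have h2 : φ' v = G.degree v - φ v := rfl
        have := hφle v
        omega
    obtain ⟨H₁, h₁, he₁⟩ := hH1
    obtain ⟨H₂, h₂, he₂⟩ := hH2
    exact ⟨H₁, h₁, he₁, H₂, h₂, he₂⟩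
  · intro hfree
    obtain ⟨H, hH, hdeg⟩ := hne
    choose! F₁ hF₁ hmem₁ F₂ hF₂ hmem₂ using hfree
    set N := G.edgeFinset.card with hN
    set den : ℝ := 1 + 2 * N with hden
    have hden0 : (0:ℝ) < den := by positivity
    refine ⟨fun e => ((if e ∈ H then (1:ℝ) else 0) +
      ∑ e' ∈ G.edgeFinset, ((if e ∈ F₁ e' then (1:ℝ) else 0) +
        (if e ∈ F₂ e' then (1:ℝ) else 0))) / den, ?_, ?_⟩
    · intro e he
      have hN1 : 1 ≤ (N:ℝ) := by
        have : 0 < N := Finset.card_pos.2 ⟨e, he⟩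
        exact_mod_cast this
      constructor
      · apply div_pos _ hden0
        have h1 : (0:ℝ) ≤ if e ∈ H then (1:ℝ) else 0 := by positivity
        have h2 : ∑ e' ∈ G.edgeFinset, ((if e ∈ F₁ e' then (1:ℝ) else 0) +
            (if e ∈ F₂ e' then (1:ℝ) else 0)) ≥ 1 := by
          have : ∀ e' ∈ G.edgeFinset, (0:ℝ) ≤ (if e ∈ F₁ e' then (1:ℝ) else 0) +
              (if e ∈ F₂ e' then (1:ℝ) else 0) := by intro e' _; positivity
          have hsingle : (1:ℝ) ≤ (if e ∈ F₁ e then (1:ℝ) else 0) +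
              (if e ∈ F₂ e then (1:ℝ) else 0) := by
            rw [if_pos (hmem₁ e he)]
            have : (0:ℝ) ≤ if e ∈ F₂ e then (1:ℝ) else 0 := by positivity
            linarith
          calc (1:ℝ) ≤ _ := hsingle
            _ ≤ _ := Finset.single_le_sum this he
        linarith
      · rw [div_lt_one hden0]
        have h1 : (if e ∈ H then (1:ℝ) else 0) ≤ 1 := by split_ifs <;> norm_num
        have h2 : ∑ e' ∈ G.edgeFinset, (if e ∈ F₁ e' then (1:ℝ) else 0) ≤ N := by
          calc ∑ e' ∈ G.edgeFinset, (if e ∈ F₁ e' then (1:ℝ) else 0)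
              ≤ ∑ e' ∈ G.edgeFinset, 1 := by
                apply Finset.sum_le_sum
                intro e' _
                split_ifs <;> norm_num
            _ = N := by rw [Finset.sum_const, nsmul_eq_mul, mul_one, hN]
        have h3 : ∑ e' ∈ G.edgeFinset, (if e ∈ F₂ e' then (1:ℝ) else 0) < N := by
          have hlt : ∑ e' ∈ G.edgeFinset, (if e ∈ F₂ e' then (1:ℝ) else 0)
              < ∑ e' ∈ G.edgeFinset, 1 := by
            apply Finset.sum_lt_sum
            · intro e' _; split_ifs <;> norm_num
            · exact ⟨e, he, by rw [if_neg (hmem₂ e he)]; norm_num⟩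
          calc _ < ∑ e' ∈ G.edgeFinset, (1:ℝ) := hlt
            _ = N := by rw [Finset.sum_const, nsmul_eq_mul, mul_one, hN]
        rw [Finset.sum_add_distrib]
        rw [hden]
        linarith
    · intro v
      rw [← Finset.sum_div]
      rw [div_eq_iff (ne_of_gt hden0)]
      have hcount : ∀ (K : Finset (Sym2 V)), K ⊆ G.edgeFinset →
          (∀ w : V, (K.filter fun e' => w ∈ e').card = φ w) →
          ∑ e ∈ G.edgeFinset.filter (fun e => v ∈ e), (if e ∈ K then (1:ℝ) else 0)
            = (φ v : ℝ) := by
        intro K hK hKdeg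
        rw [Finset.sum_boole]
        congr 1
        rw [← hKdeg v]
        congr 1
        ext e
        simp only [Finset.mem_filter]
        constructor
        · rintro ⟨⟨_, h2⟩, h3⟩; exact ⟨h3, h2⟩
        · rintro ⟨h1, h2⟩; exact ⟨⟨hK h1, h2⟩, h1⟩
      have hmain : ∑ e ∈ G.edgeFinset.filter (fun e => v ∈ e),
          ((if e ∈ H then (1:ℝ) else 0) +
            ∑ e' ∈ G.edgeFinset, ((if e ∈ F₁ e' then (1:ℝ) else 0) +
              (if e ∈ F₂ e' then (1:ℝ) else 0)))
          = (φ v : ℝ) + ∑ e' ∈ G.edgeFinset, ((φ v : ℝ) + (φ v : ℝ)) := by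
        rw [Finset.sum_add_distrib, hcount H hH hdeg]
        congr 1
        rw [Finset.sum_comm]
        apply Finset.sum_congr rfl
        intro e' he'
        rw [Finset.sum_add_distrib, hcount (F₁ e') (hF₁ e' he').1 (hF₁ e' he').2,
          hcount (F₂ e') (hF₂ e' he').1 (hF₂ e' he').2]
      rw [hmain, Finset.sum_const, nsmul_eq_mul, hden, hN]
      ring
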